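/- For every m ≥ 1 and every x ∈ ℝ^m, -∑_{i=1}^m ψ'(-x_i) x_i ≥ ‖x⁻‖₁ - m/2, where ‖x⁻‖₁ = ∑_{i=1}^m max(-x_i, 0). -/

import Mathlib

open scoped BigOperators

noncomputable section

def psi (t : ℝ) : ℝ :=
  if t ≤ -1 then -(1/2)
  else if t ≤ 0 then (t+1)^3 - (1/2)*(t+1)^4 - 1/2
  else t

def psi' (t : ℝ) : ℝ :=
  if t ≤ -1 then 0
  else if t ≤ 0 then 3*(t+1)^2 - 2*(t+1)^3
  else 1

lemma psi_eq_of_le (s : ℝ) (h : s ≤ -1) : psi s = -(1/2) := if_pos h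

lemma psi_eq_poly_on : ∀ s ∈ Set.Icc (-1:ℝ) 0, psi s = (s+1)^3 - (1/2)*(s+1)^4 - 1/2 := by
  rintro s ⟨h1, h2⟩
  rcases eq_or_lt_of_le h1 with h | h
  · rw [psi, if_pos (le_of_eq h.symm), ← h]; norm_num
  · rw [psi, if_neg (not_le.mpr h), if_pos h2]

lemma psi_eq_id (s : ℝ) (h : 0 ≤ s) : psi s = s := by
  rcases eq_or_lt_of_le h with h | h
  · rw [← h, psi]; norm_num
  · rw [psi, if_neg (by linarith), if_neg (not_le.mpr h)]

lemma hasDerivAt_poly (t : ℝ) :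
    HasDerivAt (fun t : ℝ => (t+1)^3 - (1/2)*(t+1)^4 - 1/2) (3*(t+1)^2 - 2*(t+1)^3) t := by
  have h1 : HasDerivAt (fun t : ℝ => t + 1) 1 t := (hasDerivAt_id t).add_const 1
  have h := (((h1.fun_pow 3).sub ((h1.fun_pow 4).const_mul (1/2:ℝ))).sub_const (1/2:ℝ))
  exact h.congr_deriv (by push_cast; ring)

lemma hasDerivAt_psi (t : ℝ) : HasDerivAt psi (psi' t) t := by
  rcases lt_trichotomy t (-1) with h | h | h
  · rw [show psi' t = 0 by simp [psi', h.le]]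
    have heq : psi =ᶠ[nhds t] (fun _ => -(1/2:ℝ)) := by
      filter_upwards [Iio_mem_nhds h] with s hs
      exact psi_eq_of_le s (le_of_lt (Set.mem_Iio.mp hs))
    exact (hasDerivAt_const t (-(1/2:ℝ))).congr_of_eventuallyEq heq
  · subst h
    rw [show psi' (-1) = 0 by norm_num [psi']]
    have hL : HasDerivWithinAt psi 0 (Set.Iic (-1)) (-1) := by
      refine (hasDerivWithinAt_const _ _ (-(1/2:ℝ))).congr ?_ ?_
      · intro s hs; exact psi_eq_of_le s (Set.mem_Iic.mp hs)
      · exact psi_eq_of_le _ le_rfl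
    have hR : HasDerivWithinAt psi 0 (Set.Icc (-1) 0) (-1) := by
      have h := (hasDerivAt_poly (-1)).hasDerivWithinAt (s := Set.Icc (-1:ℝ) 0)
      norm_num at h
      exact (h.sub_const (1/2)).congr psi_eq_poly_on (by rw [psi_eq_of_le _ le_rfl]; norm_num)
    have := hL.union hR
    rw [Set.Iic_union_Icc_eq_Iic (by norm_num : (-1:ℝ) ≤ 0)] at this
    exact this.hasDerivAt (Iic_mem_nhds (by norm_num))
  · rcases lt_trichotomy t 0 with h0 | h0 | h0
    · rw [show psi' t = 3*(t+1)^2 - 2*(t+1)^3 by simp [psi', not_le.mpr h, h0.le]]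
      refine (hasDerivAt_poly t).congr_of_eventuallyEq ?_
      filter_upwards [Ioo_mem_nhds h h0] with s hs
      exact psi_eq_poly_on s ⟨hs.1.le, hs.2.le⟩
    · subst h0
      rw [show psi' 0 = 1 by norm_num [psi']]
      have hL : HasDerivWithinAt psi 1 (Set.Icc (-1) 0) 0 := by
        have h := (hasDerivAt_poly 0).hasDerivWithinAt (s := Set.Icc (-1:ℝ) 0)
        norm_num at h
        exact (h.sub_const (1/2)).congr psi_eq_poly_on (by rw [psi_eq_poly_on 0 (by norm_num)])
      have hR : HasDerivWithinAt psi 1 (Set.Ici 0) 0 := by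
        refine (hasDerivWithinAt_id 0 _).congr ?_ ?_
        · intro s hs; exact psi_eq_id s (Set.mem_Ici.mp hs)
        · exact psi_eq_id 0 le_rfl
      have := hL.union hR
      rw [Set.Icc_union_Ici_eq_Ici (by norm_num : (-1:ℝ) ≤ 0)] at this
      exact this.hasDerivAt (Ici_mem_nhds (by norm_num))
    · rw [show psi' t = 1 by simp [psi', not_le.mpr h, not_le.mpr h0]]
      refine (hasDerivAt_id t).congr_of_eventuallyEq ?_
      filter_upwards [Ioi_mem_nhds h0] with s hs
      exact psi_eq_id s (le_of_lt (Set.mem_Ioi.mp hs))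

lemma key (t : ℝ) : max t 0 - 1/2 ≤ psi' t * t := by
  unfold psi'
  rcases le_or_gt t (-1) with h | h
  · rw [if_pos h, zero_mul, max_eq_right (by linarith : t ≤ 0)]
    norm_num
  · rcases le_or_gt t 0 with h0 | h0
    · rw [if_neg (not_le.mpr h), if_pos h0, max_eq_right h0]
      nlinarith [sq_nonneg (t+1), sq_nonneg t, sq_nonneg (t + 1/2), sq_nonneg ((t+1)*t),
        sq_nonneg ((t+1)^2 - 1/2), mul_nonneg (sq_nonneg (t+1)) (neg_nonneg.mpr h0)]
    · rw [if_neg (not_le.mpr h), if_neg (not_le.mpr h0), one_mul, max_eq_left h0.le]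
      linarith

/-- For every `m ≥ 1` and `x ∈ ℝ^m`, `-∑ i, ψ'(-x_i) x_i ≥ ‖x⁻‖₁ - m/2`. -/
theorem stmt_2 (m : ℕ) (hm : 1 ≤ m) (x : Fin m → ℝ) :
    (∑ i, max (-(x i)) 0) - (m : ℝ) / 2 ≤ -∑ i, deriv psi (-(x i)) * x i := by
  have hd : ∀ s : ℝ, deriv psi s = psi' s := fun s => (hasDerivAt_psi s).deriv
  have h2 : -∑ i, deriv psi (-(x i)) * x i = ∑ i, psi' (-(x i)) * (-(x i)) := by
    rw [← Finset.sum_neg_distrib]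
    exact Finset.sum_congr rfl (fun i _ => by rw [hd]; ring)
  rw [h2]
  have h1 : (∑ i, max (-(x i)) 0) - (m:ℝ)/2 = ∑ i : Fin m, (max (-(x i)) 0 - 1/2) := by
    rw [Finset.sum_sub_distrib]
    simp
    ring
  rw [h1]
  exact Finset.sum_le_sum (fun i _ => key (-(x i)))

end
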